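/- Let φ, u : (0,∞) → ℝ be continuously differentiable functions such that φ'(r) + 2·φ(r)² ≤ u'(r) + 2·u(r)² for all r > 0, and suppose lim_{r→0⁺} 2r·φ(r) = 1 = lim_{r→0⁺} 2r·u(r). Then φ(r) ≤ u(r) for all r > 0. -/

import Mathlib

open Set Filter Real

/-- Generalized Riccati comparison: if `φ' + 2φ² ≤ u' + 2u²` on `(0,∞)` for continuously
differentiable `φ, u`, and both `2r·φ(r)` and `2r·u(r)` tend to `1` as `r → 0⁺`,
then `φ ≤ u` on `(0,∞)`. -/
theorem riccati_comparison_general (φ u φ' u' : ℝ → ℝ)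
    (hφderiv : ∀ r ∈ Set.Ioi (0 : ℝ), HasDerivAt φ (φ' r) r)
    (hφcont : ContinuousOn φ' (Set.Ioi (0 : ℝ)))
    (huderiv : ∀ r ∈ Set.Ioi (0 : ℝ), HasDerivAt u (u' r) r)
    (hucont : ContinuousOn u' (Set.Ioi (0 : ℝ)))
    (hineq : ∀ r ∈ Set.Ioi (0 : ℝ), φ' r + 2 * (φ r) ^ 2 ≤ u' r + 2 * (u r) ^ 2)
    (hφlim : Filter.Tendsto (fun r => 2 * r * φ r) (nhdsWithin 0 (Set.Ioi (0 : ℝ))) (nhds 1))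
    (hulim : Filter.Tendsto (fun r => 2 * r * u r) (nhdsWithin 0 (Set.Ioi (0 : ℝ))) (nhds 1)) :
    ∀ r ∈ Set.Ioi (0 : ℝ), φ r ≤ u r := by
  intro r hr
  have hr0 : (0:ℝ) < r := hr
  set g : ℝ → ℝ := fun t => 2 * (φ t + u t) with hgdef
  have hφc : ContinuousOn φ (Ioi 0) := fun x hx => ((hφderiv x hx).continuousAt).continuousWithinAt
  have huc : ContinuousOn u (Ioi 0) := fun x hx => ((huderiv x hx).continuousAt).continuousWithinAt
  have hgc : ContinuousOn g (Ioi 0) := continuousOn_const.mul (hφc.add huc)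
  have hInt : ∀ a ∈ Ioi (0:ℝ), ∀ b ∈ Ioi (0:ℝ), IntervalIntegrable g MeasureTheory.volume a b := by
    intro a ha b hb
    apply ContinuousOn.intervalIntegrable
    apply hgc.mono
    intro x hx
    have : min a b ≤ x := hx.1
    have : (0:ℝ) < min a b := lt_min ha hb
    exact lt_of_lt_of_le this hx.1
  set A : ℝ → ℝ := fun t => ∫ x in r..t, g x with hAdef
  have hA : ∀ t ∈ Ioi (0:ℝ), HasDerivAt A (g t) t := by
    intro t ht
    exact intervalIntegral.integral_hasDerivAt_right (hInt r hr t ht)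
      (hgc.stronglyMeasurableAtFilter isOpen_Ioi t ht)
      ((hgc t ht).continuousAt (isOpen_Ioi.mem_nhds ht))
  set F : ℝ → ℝ := fun t => Real.exp (A t) * (u t - φ t) with hFdef
  have hF : ∀ t ∈ Ioi (0:ℝ),
      HasDerivAt F (Real.exp (A t) * (g t * (u t - φ t) + (u' t - φ' t))) t := by
    intro t ht
    have h1 := (hA t ht).exp
    have h2 := (huderiv t ht).sub (hφderiv t ht)
    have h3 := h1.mul h2
    refine h3.congr_deriv ?_
    simp only [Pi.sub_apply]; ring
  have hmono : MonotoneOn F (Ioi 0) := by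
    apply monotoneOn_of_deriv_nonneg (convex_Ioi 0)
    · exact fun t ht => ((hF t ht).continuousAt).continuousWithinAt
    · rw [interior_Ioi]; exact fun t ht => (hF t ht).differentiableAt.differentiableWithinAt
    · rw [interior_Ioi]; intro t ht
      rw [(hF t ht).deriv]
      have hi := hineq t ht
      have he := Real.exp_pos (A t)
      have hinner : 0 ≤ g t * (u t - φ t) + (u' t - φ' t) := by
        simp only [hgdef]
        nlinarith [hi]
      positivity
  -- limit of 2 t w t
  have hwlim : Tendsto (fun t => 2 * t * (u t - φ t)) (nhdsWithin 0 (Ioi 0)) (nhds 0) := by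
    have h := hulim.sub hφlim
    rw [sub_self] at h
    convert h using 2 with t
    ring
  -- eventual lower bound on g
  have hev : ∀ᶠ t in nhdsWithin (0:ℝ) (Ioi 0), t⁻¹ ≤ g t := by
    filter_upwards [hφlim.eventually (eventually_ge_nhds (by norm_num : (1:ℝ)/2 < 1)),
      hulim.eventually (eventually_ge_nhds (by norm_num : (1:ℝ)/2 < 1)),
      self_mem_nhdsWithin] with t h1 h2 ht
    have ht0 : (0:ℝ) < t := ht
    have h3 : 1 ≤ t * g t := by simp only [hgdef]; nlinarith
    rw [inv_eq_one_div, div_le_iff₀ ht0]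
    linarith [h3, mul_comm t (g t)]
  obtain ⟨δ, hδ0, hδ⟩ := mem_nhdsGT_iff_exists_Ioo_subset.mp hev
  have hδ0' : (0:ℝ) < δ := hδ0
  set s : ℝ := δ / 2 with hsdef
  have hs0 : (0:ℝ) < s := by positivity
  have hsδ : s < δ := by simp only [hsdef]; linarith
  have hsI : s ∈ Ioi (0:ℝ) := hs0
  -- key bound
  have hbound : ∀ t ∈ Ioo (0:ℝ) s, |F t| ≤ (Real.exp (A s) / s) * |2 * t * (u t - φ t)| := by
    intro t ht
    have ht0 : (0:ℝ) < t := ht.1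
    have hts : t < s := ht.2
    have htI : t ∈ Ioi (0:ℝ) := ht0
    have hadd : (∫ x in r..t, g x) + ∫ x in t..s, g x = ∫ x in r..s, g x :=
      intervalIntegral.integral_add_adjacent_intervals (hInt r hr t htI) (hInt t htI s hsI)
    have hinvInt : IntervalIntegrable (fun x => x⁻¹) MeasureTheory.volume t s := by
      apply ContinuousOn.intervalIntegrable
      apply ContinuousOn.inv₀ continuousOn_id
      intro x hx
      have : min t s ≤ x := hx.1
      have h0 : (0:ℝ) < min t s := lt_min ht0 hs0
      exact ne_of_gt (lt_of_lt_of_le h0 hx.1)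
    have hmonoInt : (∫ x in t..s, x⁻¹) ≤ ∫ x in t..s, g x := by
      apply intervalIntegral.integral_mono_on hts.le hinvInt (hInt t htI s hsI)
      intro x hx
      apply hδ
      constructor
      · exact lt_of_lt_of_le ht0 hx.1
      · exact lt_of_le_of_lt hx.2 hsδ
    have hlogeq : (∫ x in t..s, x⁻¹) = Real.log (s / t) :=
      integral_inv_of_pos ht0 hs0
    have hAle : A t ≤ A s - Real.log (s / t) := by
      have : A t = A s - ∫ x in t..s, g x := by
        simp only [hAdef]; linarith [hadd]
      rw [this]
      linarith [hmonoInt, hlogeq.symm.le, hlogeq]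
    have hexple : Real.exp (A t) ≤ Real.exp (A s) * (t / s) := by
      calc Real.exp (A t) ≤ Real.exp (A s - Real.log (s / t)) := Real.exp_le_exp.mpr hAle
        _ = Real.exp (A s) / Real.exp (Real.log (s / t)) := by rw [Real.exp_sub]
        _ = Real.exp (A s) / (s / t) := by rw [Real.exp_log (by positivity)]
        _ = Real.exp (A s) * (t / s) := by field_simp
    have habs : |F t| = Real.exp (A t) * |u t - φ t| := by
      simp only [hFdef, abs_mul, abs_of_pos (Real.exp_pos _)]
    rw [habs]
    have h1 : Real.exp (A t) * |u t - φ t| ≤ Real.exp (A s) * (t / s) * |u t - φ t| := by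
      apply mul_le_mul_of_nonneg_right hexple (abs_nonneg _)
    calc Real.exp (A t) * |u t - φ t| ≤ Real.exp (A s) * (t / s) * |u t - φ t| := h1
      _ = (Real.exp (A s) / s) * (t * |u t - φ t|) := by ring
      _ ≤ (Real.exp (A s) / s) * |2 * t * (u t - φ t)| := by
          apply mul_le_mul_of_nonneg_left _ (by positivity)
          rw [abs_mul, abs_mul, abs_of_pos ht0]
          have : |(2:ℝ)| = 2 := by norm_num
          rw [this]
          nlinarith [abs_nonneg (u t - φ t), ht0.le]
  -- squeeze
  have hblim : Tendsto (fun t => (Real.exp (A s) / s) * |2 * t * (u t - φ t)|)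
      (nhdsWithin 0 (Ioi 0)) (nhds 0) := by
    have h1 : Tendsto (fun t => |2 * t * (u t - φ t)|) (nhdsWithin 0 (Ioi 0)) (nhds 0) := by
      have := hwlim.abs
      simpa using this
    have h2 := h1.const_mul (Real.exp (A s) / s)
    simpa using h2
  have hFlim : Tendsto F (nhdsWithin 0 (Ioi 0)) (nhds 0) := by
    apply squeeze_zero_norm' _ hblim
    filter_upwards [Ioo_mem_nhdsGT_of_mem (⟨le_refl 0, hs0⟩ : (0:ℝ) ∈ Ico 0 s)] with t ht
    simpa using hbound t ht
  have hev2 : ∀ᶠ t in nhdsWithin (0:ℝ) (Ioi 0), F t ≤ F r := by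
    filter_upwards [Ioo_mem_nhdsGT_of_mem (⟨le_refl 0, hr0⟩ : (0:ℝ) ∈ Ico 0 r)] with t ht
    exact hmono ht.1 hr ht.2.le
  have hFr : (0:ℝ) ≤ F r := le_of_tendsto hFlim hev2
  have he := Real.exp_pos (A r)
  simp only [hFdef] at hFr
  nlinarith [hFr, he]
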